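/- In a strictly-unital monoidal Ch^{[-1,0]}-category where the associator equals Φ(t12, t23) for a unital infinitesimal 2-braiding t (t_{UI} = t_{IU} = 0 and t_{f⊠1_I} = t_{1_I⊠f} = 0), the order-h² triangle axiom holds: α_{UIV} = 1_{U⊗V} and the homotopy components α_{f⊠1_I⊠g} = (h²/24)·([t12,t23])_{f⊠1_I⊠g} = 0, where ([t12,t23])_{f⊠1_I⊠g} expands via the vertical-composition formula into four terms each containing a factor t_{UI}, t_{IV}, t_{f⊠1_I} or t_{1_I⊠g}. -/

import Mathlib

open CategoryTheory

/-- A "degree −1 hom layer" on a preadditive category `D`, modelling the homotopies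
(degree −1 cells) of a `Ch_R^{[-1,0]}`-enriched category: for each pair of objects an
abelian group `Hmt X Y` of homotopies, a differential `d` to the degree-0 morphisms,
and (truncated) composition of homotopies with degree-0 morphisms on either side. -/
structure HomotopyStructure (D : Type*) [Category D] [Preadditive D] where
  /-- degree −1 cells -/
  Hmt : D → D → Type*
  addCommGroup : ∀ X Y, AddCommGroup (Hmt X Y)
  /-- the hom differential `∂` -/
  d : ∀ {X Y}, Hmt X Y → (X ⟶ Y)
  /-- post-composition of a homotopy with a degree-0 morphism, `g ∘ φ` -/
  lcomp : ∀ {X Y Z}, Hmt X Y → (Y ⟶ Z) → Hmt X Z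
  /-- pre-composition of a homotopy with a degree-0 morphism, `φ ∘ f` -/
  rcomp : ∀ {X Y Z}, (X ⟶ Y) → Hmt Y Z → Hmt X Z
  d_add : ∀ {X Y} (φ ψ : Hmt X Y), d (φ + ψ) = d φ + d ψ
  lcomp_add : ∀ {X Y Z} (φ ψ : Hmt X Y) (g : Y ⟶ Z), lcomp (φ + ψ) g = lcomp φ g + lcomp ψ g
  rcomp_add : ∀ {X Y Z} (f : X ⟶ Y) (φ ψ : Hmt Y Z), rcomp f (φ + ψ) = rcomp f φ + rcomp f ψ
  lcomp_id : ∀ {X Y} (φ : Hmt X Y), lcomp φ (𝟙 Y) = φ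
  rcomp_id : ∀ {X Y} (φ : Hmt X Y), rcomp (𝟙 X) φ = φ
  lcomp_comp : ∀ {X Y Z W} (φ : Hmt X Y) (g : Y ⟶ Z) (h : Z ⟶ W),
    lcomp φ (g ≫ h) = lcomp (lcomp φ g) h
  rcomp_comp : ∀ {X Y Z W} (f : X ⟶ Y) (g : Y ⟶ Z) (φ : Hmt Z W),
    rcomp (f ≫ g) φ = rcomp f (rcomp g φ)
  lcomp_rcomp : ∀ {X Y Z W} (f : X ⟶ Y) (φ : Hmt Y Z) (g : Z ⟶ W),
    lcomp (rcomp f φ) g = rcomp f (lcomp φ g)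
  d_lcomp : ∀ {X Y Z} (φ : Hmt X Y) (g : Y ⟶ Z), d (lcomp φ g) = d φ ≫ g
  d_rcomp : ∀ {X Y Z} (f : X ⟶ Y) (φ : Hmt Y Z), d (rcomp f φ) = f ≫ d φ

attribute [instance] HomotopyStructure.addCommGroup

/-- A pseudonatural transformation `ξ : F ⇒ G` between functors into a category equipped
with a homotopy layer `H`: cochain components `app U : F(U) ⟶ G(U)`, homotopy components
`hmt f` for each degree-0 morphism `f`, satisfying
`G(f)·ξ_U − ξ_{U'}·F(f) = ∂ξ_f`, `ξ_{1_U} = 0`, and `ξ_{f'∘f} = ξ_{f'}·F(f) + G(f')·ξ_f`. -/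
structure Pseudonat {C : Type*} [Category C] {D : Type*} [Category D] [Preadditive D]
    (H : HomotopyStructure D) (F G : C ⥤ D) where
  app : ∀ U : C, F.obj U ⟶ G.obj U
  hmt : ∀ {U U' : C}, (U ⟶ U') → H.Hmt (F.obj U) (G.obj U')
  d_hmt : ∀ {U U' : C} (f : U ⟶ U'),
    app U ≫ G.map f - F.map f ≫ app U' = H.d (hmt f)
  hmt_id : ∀ U : C, hmt (𝟙 U) = 0
  hmt_comp : ∀ {U U' U'' : C} (f : U ⟶ U') (f' : U' ⟶ U''),
    hmt (f ≫ f') = H.rcomp (F.map f) (hmt f') + H.lcomp (hmt f) (G.map f')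

/-- In a strictly-unital monoidal cochain 2-category (modelled by a
preadditive category with a homotopy layer `H`, a strictly associative and unital
monoidal product `tp` on objects with tensor `th` of degree-0 morphisms and tensors
`thH1, thH2` of a homotopy with a degree-0 morphism), let `t` be a *unital*
infinitesimal 2-braiding: cochain components `t U V` with `t U I = 0 = t I U`, and
homotopy components `tH f g` with `tH f 1_I = 0 = tH 1_I g`.  Then the order-h² triangle
axiom holds for the Drinfeld-associator ansatz `α = 1 + (h²/24)[t₁₂,t₂₃]`:

* the cochain commutator `[t₁₂,t₂₃]` at `(U, I, V)` vanishes, so `α_{UIV} = 1_{(UV)}`;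
* the homotopy component `([t₁₂,t₂₃])_{f ⊠ 1_I ⊠ g}` — which expands via the
  vertical-composition formula into four terms, each containing a factor
  `t_{UI}`, `t_{IV}`, `t_{f⊠1_I}` or `t_{1_I⊠g}` — vanishes, so `α_{f⊠1_I⊠g} = 0`. -/
theorem triangle_axiom_order_h2
    {C : Type*} [Category C] [Preadditive C]
    (H : HomotopyStructure C)
    (tp : C → C → C) (I : C)
    (hassoc : ∀ U V W : C, tp (tp U V) W = tp U (tp V W))
    (hunitR : ∀ U : C, tp U I = U) (hunitL : ∀ U : C, tp I U = U)
    (th : ∀ {U U' V V' : C}, (U ⟶ U') → (V ⟶ V') → (tp U V ⟶ tp U' V'))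
    (thH1 : ∀ {U U' V V' : C}, H.Hmt U U' → (V ⟶ V') → H.Hmt (tp U V) (tp U' V'))
    (thH2 : ∀ {U U' V V' : C}, (U ⟶ U') → H.Hmt V V' → H.Hmt (tp U V) (tp U' V'))
    (th_add_left : ∀ {U U' V V' : C} (f f' : U ⟶ U') (g : V ⟶ V'),
      th (f + f') g = th f g + th f' g)
    (thH1_add_left : ∀ {U U' V V' : C} (φ ψ : H.Hmt U U') (g : V ⟶ V'),
      thH1 (φ + ψ) g = thH1 φ g + thH1 ψ g)
    (thH2_add_right : ∀ {U U' V V' : C} (f : U ⟶ U') (φ ψ : H.Hmt V V'),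
      thH2 f (φ + ψ) = thH2 f φ + thH2 f ψ)
    (t : ∀ U V : C, tp U V ⟶ tp U V)
    (tH : ∀ {U U' V V' : C}, (U ⟶ U') → (V ⟶ V') → H.Hmt (tp U V) (tp U' V'))
    -- unitality of the infinitesimal 2-braiding
    (hu1 : ∀ U : C, t U I = 0)
    (hu2 : ∀ U : C, t I U = 0)
    (hu3 : ∀ {U U' : C} (f : U ⟶ U'), tH f (𝟙 I) = 0)
    (hu4 : ∀ {V V' : C} (g : V ⟶ V'), tH (𝟙 I) g = 0) :
    ∀ (U V U' V' : C) (f : U ⟶ U') (g : V ⟶ V'),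
      -- cochain components: [t₁₂, t₂₃] at (U, I, V) vanishes, hence α_{UIV} = 1
      (th (t U I) (𝟙 V)
          ≫ (eqToHom (hassoc U I V) ≫ th (𝟙 U) (t I V) ≫ eqToHom (hassoc U I V).symm)
        - (eqToHom (hassoc U I V) ≫ th (𝟙 U) (t I V) ≫ eqToHom (hassoc U I V).symm)
          ≫ th (t U I) (𝟙 V) = 0)
      ∧
      -- homotopy components: ([t₁₂,t₂₃])_{f ⊠ 1_I ⊠ g} vanishes, hence α_{f⊠1_I⊠g} = 0
      (H.rcomp
          (eqToHom (hassoc U I V) ≫ th (𝟙 U) (t I V) ≫ eqToHom (hassoc U I V).symm)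
          (thH1 (tH f (𝟙 I)) g)
        + H.lcomp
            (H.rcomp (eqToHom (hassoc U I V))
              (H.lcomp (thH2 f (tH (𝟙 I) g)) (eqToHom (hassoc U' I V').symm)))
            (th (t U' I) (𝟙 V'))
        - H.rcomp (th (t U I) (𝟙 V))
            (H.rcomp (eqToHom (hassoc U I V))
              (H.lcomp (thH2 f (tH (𝟙 I) g)) (eqToHom (hassoc U' I V').symm)))
        - H.lcomp (thH1 (tH f (𝟙 I)) g)
            (eqToHom (hassoc U' I V') ≫ th (𝟙 U') (t I V') ≫ eqToHom (hassoc U' I V').symm)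
        = 0) := by
  intro U V U' V' f g
  have th0 : ∀ {A A' B B' : C} (g : B ⟶ B'), th (0 : A ⟶ A') g = 0 := by
    intro A A' B B' g
    have h := th_add_left (0 : A ⟶ A') 0 g
    rw [add_zero] at h
    exact left_eq_add.mp h
  have thH1_0 : ∀ {A A' B B' : C} (g : B ⟶ B'), thH1 (0 : H.Hmt A A') g = 0 := by
    intro A A' B B' g
    have h := thH1_add_left (0 : H.Hmt A A') 0 g
    rw [add_zero] at h
    exact left_eq_add.mp h
  have thH2_0 : ∀ {A A' B B' : C} (f : A ⟶ A'), thH2 f (0 : H.Hmt B B') = 0 := by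
    intro A A' B B' f
    have h := thH2_add_right f (0 : H.Hmt B B') 0
    rw [add_zero] at h
    exact left_eq_add.mp h
  have rc0 : ∀ {A B B' : C} (f : A ⟶ B), H.rcomp f (0 : H.Hmt B B') = 0 := by
    intro A B B' f
    have h := H.rcomp_add f (0 : H.Hmt B B') 0
    rw [add_zero] at h
    exact left_eq_add.mp h
  have lc0 : ∀ {A A' B : C} (g : A' ⟶ B), H.lcomp (0 : H.Hmt A A') g = 0 := by
    intro A A' B g
    have h := H.lcomp_add (0 : H.Hmt A A') 0 g
    rw [add_zero] at h
    exact left_eq_add.mp h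
  constructor
  · rw [hu1, th0]; simp
  · rw [hu1, hu3, hu4, th0, thH1_0, thH2_0]
    simp [rc0, lc0]
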